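/- (Uniqueness.) Suppose a map N' sending each function f : ℤ^d → ℝ vanishing outside B to a function N' f vanishing outside B^c ∖ ∂B satisfies E[f(Z^x_t)] = E[N' f(Z^x_t)] for every (t,x) ∈ ℕ × ∂B with t ≥ 1 and every f vanishing outside B. Then N' f = N f for every such f, where N is the discrete Carr–Nadtochiy transform. -/

import Mathlib

open Finset

/-- The `i`-th standard unit vector `e_i` in `ℤ^(d+1)`. -/
def unitVec (d : ℕ) (i : Fin (d + 1)) : Fin (d + 1) → ℤ := Pi.single i 1

/-- The ℓ¹-norm `‖v‖₁ = ∑ i, |v i|` on `ℤ^(d+1)`. -/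
def norm1 {d : ℕ} (v : Fin (d + 1) → ℤ) : ℤ := ∑ i, |v i|

/-- `P t x z` represents the `t`-step transition probability `P(Z^x_t = z)` of a
time-homogeneous Markov chain on `ℤ^(d+1)` which at each step moves by `± e_i`,
with all `2(d+1)` one-step probabilities strictly positive and summing to `1`. -/
structure IsRandomWalk (d : ℕ)
    (P : ℕ → (Fin (d + 1) → ℤ) → (Fin (d + 1) → ℤ) → ℝ) : Prop where
  nonneg : ∀ t x z, 0 ≤ P t x z
  init : ∀ x z, P 0 x z = if z = x then 1 else 0
  step : ∀ t x z, P (t + 1) x z =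
      ∑ i, P 1 x (x + unitVec d i) * P t (x + unitVec d i) z
        + ∑ i, P 1 x (x - unitVec d i) * P t (x - unitVec d i) z
  sum_one : ∀ x, (∑ i, P 1 x (x + unitVec d i)) + (∑ i, P 1 x (x - unitVec d i)) = 1
  pos_add : ∀ x i, 0 < P 1 x (x + unitVec d i)
  pos_sub : ∀ x i, 0 < P 1 x (x - unitVec d i)

/-- The expectation `E[h(Z^x_t)]` (the law of `Z^x_t` has finite support). -/
noncomputable def expect {d : ℕ} (P : ℕ → (Fin (d + 1) → ℤ) → (Fin (d + 1) → ℤ) → ℝ)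
    (t : ℕ) (x : Fin (d + 1) → ℤ) (h : (Fin (d + 1) → ℤ) → ℝ) : ℝ :=
  ∑ᶠ z, h z * P t x z

/-- The finite set `S(t,x) = {(s,y) ∈ ℕ × ∂B : 1 ≤ s ≤ t, ‖y − x‖₁ ≤ t − s,
and t − s − ‖y − x‖₁ is even}`. -/
noncomputable def Sset (d t : ℕ) (x : Fin (d + 1) → ℤ) : Finset (ℕ × (Fin (d + 1) → ℤ)) :=
  ((Finset.Icc 1 t) ×ˢ (Fintype.piFinset fun i => Finset.Icc (x i - t) (x i + t))).filter
    (fun p => p.2 (Fin.last d) = 0 ∧ norm1 (p.2 - x) ≤ (t : ℤ) - p.1 ∧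
      Even ((t : ℤ) - p.1 - norm1 (p.2 - x)))

/-- The matrix `W^+_{t,x}`, with entries `(W^+)_{(s,y),(u,z)} = P(Z^y_s = z + u e_d)`. -/
noncomputable def Wplus {d : ℕ} (P : ℕ → (Fin (d + 1) → ℤ) → (Fin (d + 1) → ℤ) → ℝ)
    (t : ℕ) (x : Fin (d + 1) → ℤ) :
    Matrix {p // p ∈ Sset d t x} {p // p ∈ Sset d t x} ℝ :=
  fun p q => P p.1.1 p.1.2 (q.1.2 + Pi.single (Fin.last d) (q.1.1 : ℤ))

/-- The matrix `W^-_{t,x}`, with entries `(W^-)_{(s,y),(u,z)} = P(Z^y_s = z - u e_d)`. -/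
noncomputable def Wminus {d : ℕ} (P : ℕ → (Fin (d + 1) → ℤ) → (Fin (d + 1) → ℤ) → ℝ)
    (t : ℕ) (x : Fin (d + 1) → ℤ) :
    Matrix {p // p ∈ Sset d t x} {p // p ∈ Sset d t x} ℝ :=
  fun p q => P p.1.1 p.1.2 (q.1.2 - Pi.single (Fin.last d) (q.1.1 : ℤ))

/-- `N_{t,x} = (W^-_{t,x})⁻¹ W^+_{t,x}`. -/
noncomputable def Nmat {d : ℕ} (P : ℕ → (Fin (d + 1) → ℤ) → (Fin (d + 1) → ℤ) → ℝ)
    (t : ℕ) (x : Fin (d + 1) → ℤ) :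
    Matrix {p // p ∈ Sset d t x} {p // p ∈ Sset d t x} ℝ :=
  (Wminus P t x)⁻¹ * Wplus P t x

/-- The extended transform `N f`, vanishing outside `{w : w_d < 0}`, defined at a point
`w = x − t e_d` (with `x ∈ ∂B`, `t ≥ 1`) as the `(t,x)`-component of `N_{t,x}` applied to
the vector `(f(z + u e_d))_{(u,z) ∈ S(t,x)}`.  (Note that `(t,x) ∈ S(t,x)` always holds
in this situation, so the guard below is satisfied exactly when `w_d < 0`.) -/
noncomputable def Ntrans {d : ℕ} (P : ℕ → (Fin (d + 1) → ℤ) → (Fin (d + 1) → ℤ) → ℝ)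
    (f : (Fin (d + 1) → ℤ) → ℝ) : (Fin (d + 1) → ℤ) → ℝ := fun w =>
  if hm : ((-(w (Fin.last d))).toNat, Function.update w (Fin.last d) 0) ∈
      Sset d (-(w (Fin.last d))).toNat (Function.update w (Fin.last d) 0) then
    (Nmat P (-(w (Fin.last d))).toNat (Function.update w (Fin.last d) 0)).mulVec
      (fun p => f (p.1.2 + Pi.single (Fin.last d) (p.1.1 : ℤ)))
      ⟨((-(w (Fin.last d))).toNat, Function.update w (Fin.last d) 0), hm⟩
  else 0

/-! ### Auxiliary lemmas -/

section Aux

open Matrix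

variable {d : ℕ}

private lemma norm1_nonneg (v : Fin (d + 1) → ℤ) : 0 ≤ norm1 v :=
  Finset.sum_nonneg fun _ _ => abs_nonneg _

private lemma abs_le_norm1 (v : Fin (d + 1) → ℤ) (i : Fin (d + 1)) : |v i| ≤ norm1 v :=
  Finset.single_le_sum (f := fun j => |v j|) (fun _ _ => abs_nonneg _) (Finset.mem_univ i)

private lemma eq_of_norm1_nonpos {v : Fin (d + 1) → ℤ} (h : norm1 v ≤ 0) : v = 0 := by
  funext i
  have h1 := abs_le_norm1 v i
  have : |v i| ≤ 0 := h1.trans h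
  simpa using abs_nonpos_iff.mp this

private lemma norm1_update (a : Fin (d + 1) → ℤ) (i : Fin (d + 1)) (c : ℤ) :
    norm1 (a + Pi.single i c) = norm1 a - |a i| + |a i + c| := by
  unfold norm1
  rw [← Finset.sum_erase_add _ _ (Finset.mem_univ i),
      ← Finset.sum_erase_add (f := fun j => |a j|) _ (Finset.mem_univ i)]
  simp only [Pi.add_apply]
  rw [Finset.sum_congr rfl (fun j hj => by
    rw [Pi.single_eq_of_ne (Finset.ne_of_mem_erase hj), add_zero])]
  rw [Pi.single_eq_same]
  ring

private lemma norm1_triangle (a b : Fin (d + 1) → ℤ) : norm1 (a + b) ≤ norm1 a + norm1 b := by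
  unfold norm1
  rw [← Finset.sum_add_distrib]
  exact Finset.sum_le_sum fun i _ => abs_add_le _ _

private lemma even_norm1_sub_sum (v : Fin (d + 1) → ℤ) : Even (norm1 v - ∑ i, v i) := by
  unfold norm1
  rw [← Finset.sum_sub_distrib]
  apply Finset.even_sum
  intro i _
  rw [Int.even_iff, Int.abs_eq_natAbs]
  omega

private lemma norm1_step (a : Fin (d + 1) → ℤ) (i : Fin (d + 1)) (c : ℤ) (hc : c = 1 ∨ c = -1) :
    norm1 (a + Pi.single i c) = norm1 a + 1 ∨ norm1 (a + Pi.single i c) = norm1 a - 1 := by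
  rw [norm1_update]
  simp only [Int.abs_eq_natAbs]
  rcases hc with h | h <;> subst h <;> omega

private lemma reach {P : ℕ → (Fin (d + 1) → ℤ) → (Fin (d + 1) → ℤ) → ℝ} (hP : IsRandomWalk d P) :
    ∀ (s : ℕ) (y w : Fin (d + 1) → ℤ), P s y w ≠ 0 →
      norm1 (w - y) ≤ (s : ℤ) ∧ Even ((s : ℤ) - norm1 (w - y)) := by
  intro s
  induction s with
  | zero =>
    intro y w h
    rw [hP.init] at h
    have : w = y := by by_contra hne; simp [hne] at h
    subst this
    simp [norm1, sub_self]
  | succ n ih =>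
    intro y w h
    rw [hP.step] at h
    have : (∑ i, P 1 y (y + unitVec d i) * P n (y + unitVec d i) w) ≠ 0 ∨
        (∑ i, P 1 y (y - unitVec d i) * P n (y - unitVec d i) w) ≠ 0 := by
      by_contra hc
      push_neg at hc
      rw [hc.1, hc.2] at h
      simp at h
    have key : ∃ (y' : Fin (d + 1) → ℤ) (i : Fin (d + 1)) (c : ℤ),
        (c = 1 ∨ c = -1) ∧ y' = y + Pi.single i c ∧ P n y' w ≠ 0 := by
      rcases this with h1 | h1
      · obtain ⟨i, _, hi⟩ := Finset.exists_ne_zero_of_sum_ne_zero h1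
        exact ⟨y + unitVec d i, i, 1, Or.inl rfl, rfl, fun hz => hi (by rw [hz, mul_zero])⟩
      · obtain ⟨i, _, hi⟩ := Finset.exists_ne_zero_of_sum_ne_zero h1
        refine ⟨y - unitVec d i, i, -1, Or.inr rfl, ?_, fun hz => hi (by rw [hz, mul_zero])⟩
        funext j; by_cases hj : j = i <;> simp [unitVec, hj, Pi.single_eq_of_ne, sub_eq_add_neg]
    obtain ⟨y', i, c, hc, hy', hne⟩ := key
    obtain ⟨h1, h2⟩ := ih y' w hne
    have hw : w - y = (w - y') + Pi.single i c := by
      rw [hy']; funext j; simp [Pi.sub_apply, Pi.add_apply]; ring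
    have := norm1_step (w - y') i c hc
    rw [← hw] at this
    rw [Int.even_iff] at h2 ⊢
    constructor
    · push_cast; omega
    · push_cast; omega

private lemma pos_down {P : ℕ → (Fin (d + 1) → ℤ) → (Fin (d + 1) → ℤ) → ℝ}
    (hP : IsRandomWalk d P) :
    ∀ (s : ℕ) (y : Fin (d + 1) → ℤ), 0 < P s y (y - Pi.single (Fin.last d) (s : ℤ)) := by
  intro s
  induction s with
  | zero => intro y; simp [hP.init]
  | succ n ih =>
    intro y
    rw [hP.step]
    have hterm : 0 < P 1 y (y - unitVec d (Fin.last d)) *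
        P n (y - unitVec d (Fin.last d)) (y - Pi.single (Fin.last d) ((n + 1 : ℕ) : ℤ)) := by
      have heq : y - Pi.single (Fin.last d) ((n + 1 : ℕ) : ℤ) =
          (y - unitVec d (Fin.last d)) - Pi.single (Fin.last d) (n : ℤ) := by
        funext j
        by_cases hj : j = Fin.last d <;>
          simp [unitVec, hj, Pi.single_eq_of_ne, Pi.sub_apply] <;> push_cast <;> ring
      rw [heq]
      exact mul_pos (hP.pos_sub y (Fin.last d)) (ih _)
    have h1 : 0 ≤ ∑ i, P 1 y (y + unitVec d i) * P n (y + unitVec d i)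
        (y - Pi.single (Fin.last d) ((n + 1 : ℕ) : ℤ)) :=
      Finset.sum_nonneg fun i _ => mul_nonneg (hP.nonneg _ _ _) (hP.nonneg _ _ _)
    have h2 : P 1 y (y - unitVec d (Fin.last d)) *
        P n (y - unitVec d (Fin.last d)) (y - Pi.single (Fin.last d) ((n + 1 : ℕ) : ℤ)) ≤
        ∑ i, P 1 y (y - unitVec d i) * P n (y - unitVec d i)
          (y - Pi.single (Fin.last d) ((n + 1 : ℕ) : ℤ)) :=
      Finset.single_le_sum (f := fun i => P 1 y (y - unitVec d i) * P n (y - unitVec d i)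
          (y - Pi.single (Fin.last d) ((n + 1 : ℕ) : ℤ)))
        (fun i _ => mul_nonneg (hP.nonneg _ _ _) (hP.nonneg _ _ _))
        (Finset.mem_univ (Fin.last d))
    linarith

private lemma mem_Sset {t : ℕ} {x : Fin (d + 1) → ℤ} {p : ℕ × (Fin (d + 1) → ℤ)} :
    p ∈ Sset d t x ↔ 1 ≤ p.1 ∧ p.1 ≤ t ∧ p.2 (Fin.last d) = 0 ∧
      norm1 (p.2 - x) ≤ (t : ℤ) - p.1 ∧ Even ((t : ℤ) - p.1 - norm1 (p.2 - x)) := by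
  simp only [Sset, Finset.mem_filter, Finset.mem_product, Finset.mem_Icc,
    Fintype.mem_piFinset]
  constructor
  · rintro ⟨⟨⟨h1, h2⟩, _⟩, h3, h4, h5⟩; exact ⟨h1, h2, h3, h4, h5⟩
  · rintro ⟨h1, h2, h3, h4, h5⟩
    refine ⟨⟨⟨h1, h2⟩, fun i => ?_⟩, h3, h4, h5⟩
    have ha := abs_le_norm1 (p.2 - x) i
    have : |p.2 i - x i| ≤ (t : ℤ) := by
      have : (p.1 : ℤ) ≥ 1 := by exact_mod_cast h1
      calc |p.2 i - x i| = |(p.2 - x) i| := by rw [Pi.sub_apply]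
        _ ≤ norm1 (p.2 - x) := abs_le_norm1 _ i
        _ ≤ (t : ℤ) - p.1 := h4
        _ ≤ (t : ℤ) := by omega
    rw [abs_le] at this
    omega

private lemma self_mem_Sset {t : ℕ} {x : Fin (d + 1) → ℤ} (ht : 1 ≤ t)
    (hx : x (Fin.last d) = 0) : (t, x) ∈ Sset d t x := by
  rw [mem_Sset]
  have h0 : norm1 (x - x) = 0 := by simp [norm1, sub_self]
  refine ⟨ht, le_refl t, hx, by rw [h0]; omega, by rw [h0]; simpa using ⟨0, by ring⟩⟩

private lemma mem_S_target {t s : ℕ} {x y w : Fin (d + 1) → ℤ}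
    (hs : (s, y) ∈ Sset d t x)
    (hr1 : norm1 (w - y) ≤ (s : ℤ)) (hr2 : Even ((s : ℤ) - norm1 (w - y)))
    (hw : w (Fin.last d) ≠ 0) :
    ((w (Fin.last d)).natAbs, Function.update w (Fin.last d) 0) ∈ Sset d t x := by
  rw [mem_Sset] at hs ⊢
  obtain ⟨hs1, hs2, hy, hyx, hyxe⟩ := hs
  dsimp only at hs1 hs2 hy hyx hyxe ⊢
  set z := Function.update w (Fin.last d) 0 with hz
  have hzlast : z (Fin.last d) = 0 := Function.update_self _ _ _
  have hdecomp : w - y = (z - y) + Pi.single (Fin.last d) (w (Fin.last d)) := by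
    funext j
    by_cases hj : j = Fin.last d
    · subst hj
      simp [hz, Pi.sub_apply, Pi.add_apply, Function.update_self, hy]
      try ring
    · simp [hz, Pi.sub_apply, Pi.add_apply, Function.update_of_ne hj,
        Pi.single_eq_of_ne hj]
  have hnorm : norm1 (w - y) = norm1 (z - y) + |w (Fin.last d)| := by
    rw [hdecomp, norm1_update]
    rw [Pi.sub_apply, hzlast, hy]
    simp
  have hdecomp2 : z - x = (z - y) + (y - x) := by funext j; simp [Pi.sub_apply, Pi.add_apply]
  have htri : norm1 (z - x) ≤ norm1 (z - y) + norm1 (y - x) := by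
    rw [hdecomp2]; exact norm1_triangle _ _
  have hsum : (∑ i, (z - x) i) = (∑ i, (z - y) i) + ∑ i, (y - x) i := by
    rw [← Finset.sum_add_distrib]
    exact Finset.sum_congr rfl fun i _ => by simp only [Pi.sub_apply, Pi.add_apply]; ring
  have he1 := even_norm1_sub_sum (z - x)
  have he2 := even_norm1_sub_sum (z - y)
  have he3 := even_norm1_sub_sum (y - x)
  have hn1 := norm1_nonneg (z - x)
  have hn2 := norm1_nonneg (z - y)
  rw [Int.even_iff] at hr2 hyxe he1 he2 he3
  rw [Int.abs_eq_natAbs] at hnorm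
  refine ⟨by omega, by omega, hzlast, by omega, ?_⟩
  rw [Int.even_iff]
  omega

private lemma phi_injOn {t : ℕ} {x : Fin (d + 1) → ℤ} (ε : ℤ) (hε : ε = 1 ∨ ε = -1) :
    Set.InjOn (fun q : ℕ × (Fin (d + 1) → ℤ) =>
      q.2 + Pi.single (Fin.last d) (ε * q.1)) (Sset d t x) := by
  intro q hq q' hq' heq
  have hq2 : q.2 (Fin.last d) = 0 := (mem_Sset.mp hq).2.2.1
  have hq2' : q'.2 (Fin.last d) = 0 := (mem_Sset.mp hq').2.2.1
  have hlast := congrFun heq (Fin.last d)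
  simp only [Pi.add_apply, Pi.single_eq_same, hq2, hq2', zero_add] at hlast
  have h1 : q.1 = q'.1 := by
    rcases hε with h | h <;> subst h <;> omega
  have h2 : q.2 = q'.2 := by
    funext j
    by_cases hj : j = Fin.last d
    · rw [hj, hq2, hq2']
    · have := congrFun heq j
      simpa [Pi.add_apply, Pi.single_eq_of_ne hj] using this
  exact Prod.ext h1 h2

private lemma expect_eq_sum {P : ℕ → (Fin (d + 1) → ℤ) → (Fin (d + 1) → ℤ) → ℝ}
    (hP : IsRandomWalk d P) {t s : ℕ} {x y : Fin (d + 1) → ℤ}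
    (hst : (s, y) ∈ Sset d t x) (ε : ℤ) (hε : ε = 1 ∨ ε = -1)
    (h : (Fin (d + 1) → ℤ) → ℝ)
    (hh : ∀ w, (w (Fin.last d)) * ε ≤ 0 → h w = 0) :
    _root_.expect P s y h = ∑ q ∈ Sset d t x,
      h (q.2 + Pi.single (Fin.last d) (ε * q.1)) *
        P s y (q.2 + Pi.single (Fin.last d) (ε * q.1)) := by
  unfold _root_.expect
  rw [finsum_eq_finset_sum_of_support_subset _
    (s := (Sset d t x).image (fun q : ℕ × (Fin (d + 1) → ℤ) =>
      q.2 + Pi.single (Fin.last d) (ε * q.1)))]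
  · rw [Finset.sum_image (fun q hq q' hq' => phi_injOn ε hε hq hq')]
  · intro w hw
    simp only [Function.mem_support, ne_eq] at hw
    have hhw : h w ≠ 0 := fun hz => hw (by rw [hz, zero_mul])
    have hPw : P s y w ≠ 0 := fun hz => hw (by rw [hz, mul_zero])
    have hwl : 0 < w (Fin.last d) * ε := by
      by_contra hc
      exact hhw (hh w (by push_neg at hc; exact hc))
    have hwne : w (Fin.last d) ≠ 0 := fun hz => by rw [hz, zero_mul] at hwl; omega
    obtain ⟨hr1, hr2⟩ := reach hP s y w hPw
    have hmem := mem_S_target hst hr1 hr2 hwne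
    simp only [Finset.coe_image, Set.mem_image, Finset.mem_coe]
    refine ⟨((w (Fin.last d)).natAbs, Function.update w (Fin.last d) 0), hmem, ?_⟩
    funext j
    by_cases hj : j = Fin.last d
    · subst hj
      simp only [Pi.add_apply, Function.update_self, Pi.single_eq_same, zero_add]
      rcases hε with h | h <;> subst h <;> omega
    · simp [Pi.add_apply, Function.update_of_ne hj, Pi.single_eq_of_ne hj]

private lemma norm1_sub_sub_single {y z : Fin (d + 1) → ℤ} (hy : y (Fin.last d) = 0)
    (hz : z (Fin.last d) = 0) (u : ℤ) :
    norm1 (z - Pi.single (Fin.last d) u - y) = norm1 (z - y) + |u| := by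
  have hd : z - Pi.single (Fin.last d) u - y = (z - y) + Pi.single (Fin.last d) (-u) := by
    funext j
    by_cases hj : j = Fin.last d
    · subst hj; simp only [Pi.sub_apply, Pi.add_apply, Pi.single_eq_same]; ring
    · simp [Pi.sub_apply, Pi.add_apply, Pi.single_eq_of_ne hj]
  rw [hd, norm1_update, Pi.sub_apply, hz, hy]
  simp

private lemma wminus_zero_of_lt {P : ℕ → (Fin (d + 1) → ℤ) → (Fin (d + 1) → ℤ) → ℝ}
    (hP : IsRandomWalk d P) {t : ℕ} {x : Fin (d + 1) → ℤ}
    (p q : {r // r ∈ Sset d t x}) (h : p.1.1 < q.1.1) : Wminus P t x p q = 0 := by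
  by_contra hne
  obtain ⟨hr1, _⟩ := reach hP p.1.1 p.1.2 _ hne
  rw [norm1_sub_sub_single ((mem_Sset.mp p.2).2.2.1) ((mem_Sset.mp q.2).2.2.1)] at hr1
  have := norm1_nonneg (q.1.2 - p.1.2)
  have habs : |(q.1.1 : ℤ)| = (q.1.1 : ℤ) := abs_of_nonneg (by positivity)
  omega

private lemma wminus_zero_of_ne {P : ℕ → (Fin (d + 1) → ℤ) → (Fin (d + 1) → ℤ) → ℝ}
    (hP : IsRandomWalk d P) {t : ℕ} {x : Fin (d + 1) → ℤ}
    (p q : {r // r ∈ Sset d t x}) (heq : p.1.1 = q.1.1) (hne : p ≠ q) :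
    Wminus P t x p q = 0 := by
  by_contra hne2
  obtain ⟨hr1, _⟩ := reach hP p.1.1 p.1.2 _ hne2
  rw [norm1_sub_sub_single ((mem_Sset.mp p.2).2.2.1) ((mem_Sset.mp q.2).2.2.1)] at hr1
  have habs : |(q.1.1 : ℤ)| = (q.1.1 : ℤ) := abs_of_nonneg (by positivity)
  rw [habs, heq] at hr1
  have hz : q.1.2 - p.1.2 = 0 := eq_of_norm1_nonpos (by omega)
  apply hne
  have h2 : q.1.2 = p.1.2 := by
    funext j; have := congrFun hz j; simp [Pi.sub_apply] at this; omega
  exact Subtype.ext (Prod.ext heq h2.symm)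

private lemma wminus_isUnit_det {P : ℕ → (Fin (d + 1) → ℤ) → (Fin (d + 1) → ℤ) → ℝ}
    (hP : IsRandomWalk d P) (t : ℕ) (x : Fin (d + 1) → ℤ) :
    IsUnit (Wminus P t x).det := by
  rw [isUnit_iff_ne_zero, ← Matrix.det_transpose]
  have hbt : ((Wminus P t x)ᵀ).BlockTriangular (fun p => p.1.1) := by
    intro q p hlt
    exact wminus_zero_of_lt hP p q hlt
  rw [hbt.det]
  apply Finset.prod_ne_zero_iff.mpr
  intro a _
  have hdiag : ((Wminus P t x)ᵀ).toSquareBlock (fun p => p.1.1) a =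
      Matrix.diagonal (fun p => Wminus P t x p.1 p.1) := by
    ext i j
    by_cases hij : i = j
    · subst hij
      simp [Matrix.toSquareBlock, Matrix.diagonal, Matrix.transpose,
        Matrix.toSquareBlockProp, Matrix.submatrix]
    · rw [Matrix.diagonal_apply_ne _ hij]
      have hne : j.1 ≠ i.1 := fun h => hij (Subtype.ext h.symm)
      have hfst : j.1.1.1 = i.1.1.1 := by rw [j.2, i.2]
      exact wminus_zero_of_ne hP j.1 i.1 hfst hne
  rw [hdiag, Matrix.det_diagonal]
  apply Finset.prod_ne_zero_iff.mpr
  intro p _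
  exact ne_of_gt (pos_down hP p.1.1.1 p.1.1.2)

end Aux

/-- Uniqueness: any map `N'` sending functions vanishing outside `B` to
functions vanishing outside `Bᶜ ∖ ∂B` and satisfying `E[f(Z^x_t)] = E[N' f(Z^x_t)]` for
all `(t,x) ∈ ℕ × ∂B`, `t ≥ 1`, coincides with `N`. -/
theorem stmt_12 (d : ℕ) (P : ℕ → (Fin (d + 1) → ℤ) → (Fin (d + 1) → ℤ) → ℝ)
    (hP : IsRandomWalk d P)
    (N' : ((Fin (d + 1) → ℤ) → ℝ) → ((Fin (d + 1) → ℤ) → ℝ))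
    (hsupp : ∀ f : (Fin (d + 1) → ℤ) → ℝ, (∀ z, z (Fin.last d) ≤ 0 → f z = 0) →
      ∀ z, 0 ≤ z (Fin.last d) → N' f z = 0)
    (hagree : ∀ f : (Fin (d + 1) → ℤ) → ℝ, (∀ z, z (Fin.last d) ≤ 0 → f z = 0) →
      ∀ t : ℕ, 1 ≤ t → ∀ x : Fin (d + 1) → ℤ, x (Fin.last d) = 0 →
        expect P t x f = expect P t x (N' f)) :
    ∀ f : (Fin (d + 1) → ℤ) → ℝ, (∀ z, z (Fin.last d) ≤ 0 → f z = 0) →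
      N' f = Ntrans P f := by
  intro f hf
  funext w
  by_cases hwl : 0 ≤ w (Fin.last d)
  · rw [hsupp f hf w hwl]
    simp only [Ntrans]
    rw [dif_neg]
    intro hm
    have h1 : (1 : ℕ) ≤ (-(w (Fin.last d))).toNat := (mem_Sset.mp hm).1
    omega
  · push_neg at hwl
    set t : ℕ := (-(w (Fin.last d))).toNat with htdef
    set x : Fin (d + 1) → ℤ := Function.update w (Fin.last d) 0 with hxdef
    have htz : (t : ℤ) = -(w (Fin.last d)) := Int.toNat_of_nonneg (by omega)
    have ht : 1 ≤ t := by omega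
    have hx : x (Fin.last d) = 0 := Function.update_self _ _ _
    have hm : (t, x) ∈ Sset d t x := self_mem_Sset ht hx
    have hdet := wminus_isUnit_det hP t x
    have hvec : (Wminus P t x).mulVec
        (fun p : {p // p ∈ Sset d t x} =>
          N' f (p.1.2 - Pi.single (Fin.last d) (p.1.1 : ℤ))) =
        (Wplus P t x).mulVec
        (fun p : {p // p ∈ Sset d t x} =>
          f (p.1.2 + Pi.single (Fin.last d) (p.1.1 : ℤ))) := by
      funext p
      obtain ⟨⟨s, y⟩, hp⟩ := p
      have h1 : 1 ≤ s := (mem_Sset.mp hp).1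
      have hy : y (Fin.last d) = 0 := (mem_Sset.mp hp).2.2.1
      have hag := hagree f hf s h1 y hy
      have hplus := expect_eq_sum hP hp 1 (Or.inl rfl) f
        (fun v hv => hf v (by simpa using hv))
      have hminus := expect_eq_sum hP hp (-1) (Or.inr rfl) (N' f)
        (fun v hv => hsupp f hf v (by simpa using hv))
      simp only [one_mul] at hplus
      simp only [neg_one_mul, Pi.single_neg, ← sub_eq_add_neg] at hminus
      have e1 : (Wplus P t x).mulVec
          (fun p : {p // p ∈ Sset d t x} =>
            f (p.1.2 + Pi.single (Fin.last d) (p.1.1 : ℤ))) ⟨(s, y), hp⟩ =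
          ∑ q ∈ Sset d t x, f (q.2 + Pi.single (Fin.last d) (q.1 : ℤ)) *
            P s y (q.2 + Pi.single (Fin.last d) (q.1 : ℤ)) := by
        simp only [Matrix.mulVec, dotProduct]
        exact (Finset.sum_coe_sort (Sset d t x)
          (fun a => P s y (a.2 + Pi.single (Fin.last d) (a.1 : ℤ)) *
            f (a.2 + Pi.single (Fin.last d) (a.1 : ℤ)))).trans
          (Finset.sum_congr rfl fun q _ => mul_comm _ _)
      have e2 : (Wminus P t x).mulVec
          (fun p : {p // p ∈ Sset d t x} =>
            N' f (p.1.2 - Pi.single (Fin.last d) (p.1.1 : ℤ))) ⟨(s, y), hp⟩ =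
          ∑ q ∈ Sset d t x, N' f (q.2 - Pi.single (Fin.last d) (q.1 : ℤ)) *
            P s y (q.2 - Pi.single (Fin.last d) (q.1 : ℤ)) := by
        simp only [Matrix.mulVec, dotProduct]
        exact (Finset.sum_coe_sort (Sset d t x)
          (fun a => P s y (a.2 - Pi.single (Fin.last d) (a.1 : ℤ)) *
            N' f (a.2 - Pi.single (Fin.last d) (a.1 : ℤ)))).trans
          (Finset.sum_congr rfl fun q _ => mul_comm _ _)
      rw [e1, e2, ← hplus, ← hminus]
      exact hag.symm
    have hG : (Nmat P t x).mulVec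
        (fun p : {p // p ∈ Sset d t x} =>
          f (p.1.2 + Pi.single (Fin.last d) (p.1.1 : ℤ))) =
        (fun p : {p // p ∈ Sset d t x} =>
          N' f (p.1.2 - Pi.single (Fin.last d) (p.1.1 : ℤ))) := by
      rw [Nmat, ← Matrix.mulVec_mulVec, ← hvec, Matrix.mulVec_mulVec,
        Matrix.nonsing_inv_mul _ hdet, Matrix.one_mulVec]
    simp only [Ntrans]
    rw [dif_pos hm, hG]
    have hxw : x - Pi.single (Fin.last d) ((t : ℕ) : ℤ) = w := by
      funext j
      by_cases hj : j = Fin.last d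
      · subst hj
        simp only [Pi.sub_apply, hx, Pi.single_eq_same]
        omega
      · simp [Pi.sub_apply, hxdef, Function.update_of_ne hj, Pi.single_eq_of_ne hj]
    show N' f w = N' f (x - Pi.single (Fin.last d) ((t : ℕ) : ℤ))
    rw [hxw]
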